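/- (Gauss) For 0 < α ≤ β, the integral I(α,β) = ∫_0^{π/2} dθ/√(α² cos²θ + β² sin²θ) satisfies I(α,β) = I((α+β)/2, √(αβ)), and consequently I(α,β) = π/(2 M(α,β)) where M(α,β) is the arithmetic-geometric mean of α and β. -/

import Mathlib

open Filter Topology

/-- The integral `I(α,β) = ∫_0^{π/2} dθ/√(α² cos²θ + β² sin²θ)`. -/
noncomputable def Iint (α β : ℝ) : ℝ :=
  ∫ θ in (0:ℝ)..(Real.pi / 2),
    1 / Real.sqrt (α ^ 2 * Real.cos θ ^ 2 + β ^ 2 * Real.sin θ ^ 2)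

open Set MeasureTheory intervalIntegral Real

noncomputable def J (a b : ℝ) : ℝ :=
  ∫ x in Set.Ioi (0:ℝ), 1 / Real.sqrt ((x ^ 2 + a ^ 2) * (x ^ 2 + b ^ 2))

lemma J_symm (a b : ℝ) : J a b = J b a := by
  unfold J; congr 1; funext x; ring_nf

lemma Iint_eq_J (a b : ℝ) (ha : 0 < a) (hb : 0 < b) :
    (∫ θ in (0:ℝ)..(Real.pi / 2),
      1 / Real.sqrt (a ^ 2 * Real.cos θ ^ 2 + b ^ 2 * Real.sin θ ^ 2)) = J a b := by
  have himg : (fun θ => b * Real.tan θ) '' Ioo 0 (Real.pi/2) = Ioi (0:ℝ) := by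
    ext y
    constructor
    · rintro ⟨θ, ⟨h1, h2⟩, rfl⟩
      exact mul_pos hb (Real.tan_pos_of_pos_of_lt_pi_div_two h1 h2)
    · intro hy
      refine ⟨Real.arctan (y / b), ⟨by simpa using Real.arctan_strictMono (div_pos hy hb), Real.arctan_lt_pi_div_two _⟩, ?_⟩
      simp only [Real.tan_arctan]
      field_simp
  have hderiv : ∀ θ ∈ Ioo 0 (Real.pi/2),
      HasDerivWithinAt (fun θ => b * Real.tan θ) (b / Real.cos θ ^ 2) (Ioo 0 (Real.pi/2)) θ := by
    intro θ hθ
    have hc : Real.cos θ ≠ 0 := by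
      have := Real.cos_pos_of_mem_Ioo (⟨by linarith [hθ.1, Real.pi_pos], hθ.2⟩ :
        θ ∈ Ioo (-(Real.pi/2)) (Real.pi/2))
      positivity
    have := (Real.hasDerivAt_tan hc).const_mul b
    exact (by simpa [div_eq_mul_inv] using this : HasDerivAt (fun θ => b * Real.tan θ) (b / Real.cos θ ^ 2) θ).hasDerivWithinAt
  have hinj : InjOn (fun θ => b * Real.tan θ) (Ioo 0 (Real.pi/2)) := by
    intro x hx y hy hxy
    have hsub : Ioo (0:ℝ) (Real.pi/2) ⊆ Ioo (-(Real.pi/2)) (Real.pi/2) := by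
      intro z hz; exact ⟨by linarith [hz.1, Real.pi_pos], hz.2⟩
    refine Real.injOn_tan (hsub hx) (hsub hy) ?_
    have := mul_left_cancel₀ hb.ne' hxy
    exact this
  have key := MeasureTheory.integral_image_eq_integral_abs_deriv_smul measurableSet_Ioo hderiv hinj
    (fun x => 1 / Real.sqrt ((x ^ 2 + a ^ 2) * (x ^ 2 + b ^ 2)))
  rw [himg] at key
  unfold J
  rw [key, intervalIntegral.integral_of_le (by positivity), MeasureTheory.integral_Ioc_eq_integral_Ioo]
  refine MeasureTheory.setIntegral_congr_fun measurableSet_Ioo ?_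
  intro θ hθ
  have hc : 0 < Real.cos θ := Real.cos_pos_of_mem_Ioo
    ⟨by linarith [hθ.1, Real.pi_pos], hθ.2⟩
  have hs2 : Real.sin θ ^ 2 = 1 - Real.cos θ ^ 2 := by
    nlinarith [Real.sin_sq_add_cos_sq θ]
  have hQ : 0 < a ^ 2 * Real.cos θ ^ 2 + b ^ 2 * Real.sin θ ^ 2 := by
    have h1 : 0 < a ^ 2 * Real.cos θ ^ 2 := by positivity
    nlinarith [sq_nonneg (b * Real.sin θ)]
  have hb2 : (b * Real.tan θ) ^ 2 + b ^ 2 = b ^ 2 / Real.cos θ ^ 2 := by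
    rw [Real.tan_eq_sin_div_cos]
    field_simp
    linear_combination Real.sin_sq_add_cos_sq θ
  have ha2 : (b * Real.tan θ) ^ 2 + a ^ 2
      = (a ^ 2 * Real.cos θ ^ 2 + b ^ 2 * Real.sin θ ^ 2) / Real.cos θ ^ 2 := by
    rw [Real.tan_eq_sin_div_cos]
    field_simp
    ring
  have hprod : ((b * Real.tan θ) ^ 2 + a ^ 2) * ((b * Real.tan θ) ^ 2 + b ^ 2)
      = (b / Real.cos θ ^ 2) ^ 2 * (a ^ 2 * Real.cos θ ^ 2 + b ^ 2 * Real.sin θ ^ 2) := by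
    rw [ha2, hb2]
    field_simp
  simp only [smul_eq_mul]
  rw [hprod, Real.sqrt_mul (sq_nonneg _), Real.sqrt_sq (by positivity : (0:ℝ) ≤ b / Real.cos θ ^ 2),
    abs_of_pos (by positivity : (0:ℝ) < b / Real.cos θ ^ 2)]
  rw [eq_comm]
  have hsq : 0 < Real.sqrt (a ^ 2 * Real.cos θ ^ 2 + b ^ 2 * Real.sin θ ^ 2) := Real.sqrt_pos.2 hQ
  field_simp

lemma J_inv (a b : ℝ) (ha : 0 < a) (hb : 0 < b) :
    J a b = J ((a + b) / 2) (Real.sqrt (a * b)) := by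
  have hab : 0 < a * b := mul_pos ha hb
  set f : ℝ → ℝ := fun x => (x - a * b / x) / 2 with hf
  set g : ℝ → ℝ := fun t => 1 / Real.sqrt ((t ^ 2 + ((a + b) / 2) ^ 2) * (t ^ 2 + a * b))
    with hg
  have himg : f '' Ioi 0 = univ := by
    apply eq_univ_of_forall
    intro t
    have hs2 : Real.sqrt (t ^ 2 + a * b) ^ 2 = t ^ 2 + a * b := Real.sq_sqrt (by positivity)
    have hxpos : 0 < t + Real.sqrt (t ^ 2 + a * b) := by
      have h1 : Real.sqrt (t ^ 2) < Real.sqrt (t ^ 2 + a * b) :=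
        Real.sqrt_lt_sqrt (sq_nonneg t) (by linarith)
      rw [Real.sqrt_sq_eq_abs] at h1
      have := le_abs_self t
      have := neg_abs_le t
      linarith
    refine ⟨t + Real.sqrt (t ^ 2 + a * b), hxpos, ?_⟩
    simp only [hf]
    field_simp
    linear_combination hs2
  have hderiv : ∀ x ∈ Ioi (0:ℝ),
      HasDerivWithinAt f ((1 + a * b / x ^ 2) / 2) (Ioi 0) x := by
    intro x hx
    have hx0 : (0:ℝ) < x := hx
    have h1 : HasDerivAt f ((1 - a * b * (-(x ^ 2)⁻¹)) / 2) x := by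
      simpa [hf, div_eq_mul_inv] using
        (((hasDerivAt_id x).sub ((hasDerivAt_inv hx0.ne').const_mul (a * b))).div_const 2)
    have h2 : (1 - a * b * (-(x ^ 2)⁻¹)) / 2 = (1 + a * b / x ^ 2) / 2 := by
      field_simp
      ring
    exact (h2 ▸ h1).hasDerivWithinAt
  have hmono : StrictMonoOn f (Ioi 0) := by
    intro x hx y hy hxy
    have hx0 : (0:ℝ) < x := hx
    have hy0 : (0:ℝ) < y := hy
    have : a * b / y < a * b / x := div_lt_div_of_pos_left hab hx0 hxy
    simp only [hf]
    linarith
  have key := MeasureTheory.integral_image_eq_integral_abs_deriv_smul measurableSet_Ioi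
    hderiv hmono.injOn g
  rw [himg, MeasureTheory.setIntegral_univ] at key
  have heven : ∫ t, g t = 2 * ∫ t in Ioi (0:ℝ), g t := by
    rw [← integral_comp_abs (f := g)]
    congr 1
    funext t
    simp [hg, sq_abs]
  have hJ1 : J ((a + b) / 2) (Real.sqrt (a * b)) = ∫ t in Ioi (0:ℝ), g t := by
    unfold J
    simp only [hg, Real.sq_sqrt hab.le]
  have hRHS : (∫ x in Ioi (0:ℝ), |(1 + a * b / x ^ 2) / 2| • g (f x))
      = 2 * J a b := by
    unfold J
    rw [← MeasureTheory.integral_const_mul]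
    refine MeasureTheory.setIntegral_congr_fun measurableSet_Ioi ?_
    intro x hx
    have hx0 : (0:ℝ) < x := hx
    have hQ : 0 < (x ^ 2 + a ^ 2) * (x ^ 2 + b ^ 2) := by positivity
    have hsQ : 0 < Real.sqrt ((x ^ 2 + a ^ 2) * (x ^ 2 + b ^ 2)) := Real.sqrt_pos.2 hQ
    have c3 : ((f x) ^ 2 + ((a + b) / 2) ^ 2) * ((f x) ^ 2 + a * b)
        = ((x ^ 2 + a * b) / (4 * x ^ 2)) ^ 2 * ((x ^ 2 + a ^ 2) * (x ^ 2 + b ^ 2)) := by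
      simp only [hf]
      field_simp
      ring
    have hgfx : g (f x) = 1 / (((x ^ 2 + a * b) / (4 * x ^ 2)) *
        Real.sqrt ((x ^ 2 + a ^ 2) * (x ^ 2 + b ^ 2))) := by
      simp only [hg]
      rw [c3, Real.sqrt_mul (sq_nonneg _), Real.sqrt_sq (by positivity)]
    simp only [smul_eq_mul]
    rw [hgfx, abs_of_pos (by positivity : (0:ℝ) < (1 + a * b / x ^ 2) / 2)]
    field_simp
    ring
  have h2 : 2 * J ((a + b) / 2) (Real.sqrt (a * b)) = 2 * J a b := by
    rw [hJ1, ← heven, key, hRHS]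
  have := mul_left_cancel₀ (two_ne_zero (α := ℝ)) h2
  linarith

lemma Iint_eq_J' (a b : ℝ) (ha : 0 < a) (hb : 0 < b) : Iint a b = J a b :=
  Iint_eq_J a b ha hb

lemma Iint_bounds (a b : ℝ) (ha : 0 < a) (hab : a ≤ b) :
    Real.pi / (2 * b) ≤ Iint a b ∧ Iint a b ≤ Real.pi / (2 * a) := by
  have hb : 0 < b := lt_of_lt_of_le ha hab
  have hposE : ∀ θ : ℝ, 0 < a ^ 2 * Real.cos θ ^ 2 + b ^ 2 * Real.sin θ ^ 2 := by
    intro θ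
    have h1 : a ^ 2 * Real.cos θ ^ 2 + a ^ 2 * Real.sin θ ^ 2 = a ^ 2 := by
      linear_combination a ^ 2 * Real.sin_sq_add_cos_sq θ
    have h2 : a ^ 2 * Real.sin θ ^ 2 ≤ b ^ 2 * Real.sin θ ^ 2 := by
      have : a ^ 2 ≤ b ^ 2 := by nlinarith
      nlinarith [sq_nonneg (Real.sin θ)]
    nlinarith [mul_pos ha ha]
  have hcont : Continuous (fun θ : ℝ =>
      1 / Real.sqrt (a ^ 2 * Real.cos θ ^ 2 + b ^ 2 * Real.sin θ ^ 2)) := by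
    refine continuous_const.div (Real.continuous_sqrt.comp (by continuity)) ?_
    intro θ
    exact (Real.sqrt_pos.2 (hposE θ)).ne'
  have hπ : (0:ℝ) ≤ Real.pi / 2 := by positivity
  constructor
  · have hmono := intervalIntegral.integral_mono_on hπ (_root_.intervalIntegrable_const (μ := MeasureTheory.volume) (c := 1/b))
      (hcont.intervalIntegrable 0 (Real.pi/2)) (fun θ _ => ?_)
    · calc Real.pi / (2 * b) = (Real.pi / 2 - 0) • (1/b) := by
            rw [smul_eq_mul]; ring
        _ = ∫ _ in (0:ℝ)..(Real.pi/2), (1/b) := (intervalIntegral.integral_const _).symm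
        _ ≤ Iint a b := hmono
    · -- 1/b ≤ 1/√(...)
      have hle : a ^ 2 * Real.cos θ ^ 2 + b ^ 2 * Real.sin θ ^ 2 ≤ b ^ 2 := by
        have hab2 : a ^ 2 ≤ b ^ 2 := by nlinarith
        have h3 := mul_le_mul_of_nonneg_right hab2 (sq_nonneg (Real.cos θ))
        have hp2 : b ^ 2 * Real.sin θ ^ 2 + b ^ 2 * Real.cos θ ^ 2 = b ^ 2 := by
          linear_combination b ^ 2 * Real.sin_sq_add_cos_sq θ
        linarith
      have h2 : Real.sqrt (a ^ 2 * Real.cos θ ^ 2 + b ^ 2 * Real.sin θ ^ 2) ≤ b := by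
        calc Real.sqrt (a ^ 2 * Real.cos θ ^ 2 + b ^ 2 * Real.sin θ ^ 2)
            ≤ Real.sqrt (b ^ 2) := Real.sqrt_le_sqrt hle
          _ = b := Real.sqrt_sq hb.le
      exact one_div_le_one_div_of_le (Real.sqrt_pos.2 (hposE θ)) h2
  · have hmono := intervalIntegral.integral_mono_on hπ
      (hcont.intervalIntegrable 0 (Real.pi/2)) (_root_.intervalIntegrable_const (μ := MeasureTheory.volume) (c := 1/a))
      (fun θ _ => ?_)
    · calc Iint a b ≤ ∫ _ in (0:ℝ)..(Real.pi/2), (1/a) := hmono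
        _ = (Real.pi / 2 - 0) • (1/a) := intervalIntegral.integral_const _
        _ = Real.pi / (2 * a) := by rw [smul_eq_mul]; ring
    · have hge : a ^ 2 ≤ a ^ 2 * Real.cos θ ^ 2 + b ^ 2 * Real.sin θ ^ 2 := by
        have hab2 : a ^ 2 ≤ b ^ 2 := by nlinarith
        have h3 := mul_le_mul_of_nonneg_right hab2 (sq_nonneg (Real.sin θ))
        have hp1 : a ^ 2 * Real.sin θ ^ 2 + a ^ 2 * Real.cos θ ^ 2 = a ^ 2 := by
          linear_combination a ^ 2 * Real.sin_sq_add_cos_sq θ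
        linarith
      have h2 : a ≤ Real.sqrt (a ^ 2 * Real.cos θ ^ 2 + b ^ 2 * Real.sin θ ^ 2) := by
        calc a = Real.sqrt (a ^ 2) := (Real.sqrt_sq ha.le).symm
          _ ≤ _ := Real.sqrt_le_sqrt hge
      exact one_div_le_one_div_of_le ha h2

theorem stmt_7 (α β : ℝ) (hα : 0 < α) (hαβ : α ≤ β)
    (A B : ℕ → ℝ) (hA0 : A 0 = α) (hB0 : B 0 = β)
    (hA : ∀ n, A (n + 1) = Real.sqrt (A n * B n))
    (hB : ∀ n, B (n + 1) = (A n + B n) / 2)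
    (M : ℝ) (hMA : Tendsto A atTop (𝓝 M)) (hMB : Tendsto B atTop (𝓝 M)) :
    Iint α β = Iint ((α + β) / 2) (Real.sqrt (α * β)) ∧
    Iint α β = Real.pi / (2 * M) := by
  have hβ : 0 < β := lt_of_lt_of_le hα hαβ
  have hpos : ∀ n, 0 < A n ∧ A n ≤ B n := by
    intro n
    induction n with
    | zero => rw [hA0, hB0]; exact ⟨hα, hαβ⟩
    | succ n ih =>
      obtain ⟨h1, h2⟩ := ih
      have hBpos : 0 < B n := lt_of_lt_of_le h1 h2
      refine ⟨by rw [hA]; positivity, ?_⟩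
      rw [hA, hB]
      have hsq : A n * B n ≤ ((A n + B n) / 2) ^ 2 := by nlinarith [sq_nonneg (A n - B n)]
      calc Real.sqrt (A n * B n) ≤ Real.sqrt (((A n + B n) / 2) ^ 2) := Real.sqrt_le_sqrt hsq
        _ = (A n + B n) / 2 := Real.sqrt_sq (by positivity)
  have hfirst : Iint α β = Iint ((α + β) / 2) (Real.sqrt (α * β)) := by
    rw [Iint_eq_J' α β hα hβ, J_inv α β hα hβ,
      ← Iint_eq_J' _ _ (by positivity) (Real.sqrt_pos.2 (by positivity))]
  have hIinv : ∀ n, Iint (A n) (B n) = Iint α β := by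
    intro n
    induction n with
    | zero => rw [hA0, hB0]
    | succ n ih =>
      obtain ⟨h1, h2⟩ := hpos n
      have hBpos : 0 < B n := lt_of_lt_of_le h1 h2
      rw [hA, hB, Iint_eq_J' _ _ (Real.sqrt_pos.2 (by positivity)) (by positivity),
        J_symm, ← J_inv _ _ h1 hBpos, ← Iint_eq_J' _ _ h1 hBpos, ih]
  have hAmono : ∀ n, α ≤ A n := by
    intro n
    induction n with
    | zero => rw [hA0]
    | succ n ih =>
      obtain ⟨h1, h2⟩ := hpos n
      rw [hA]
      calc α ≤ A n := ih
        _ = Real.sqrt (A n * A n) := by rw [Real.sqrt_mul_self h1.le]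
        _ ≤ Real.sqrt (A n * B n) := Real.sqrt_le_sqrt (by nlinarith)
  have hM : 0 < M :=
    lt_of_lt_of_le hα (ge_of_tendsto' hMA hAmono)
  have hlow : ∀ n, Real.pi / (2 * B n) ≤ Iint α β := fun n => by
    rw [← hIinv n]; exact (Iint_bounds (A n) (B n) (hpos n).1 (hpos n).2).1
  have hhigh : ∀ n, Iint α β ≤ Real.pi / (2 * A n) := fun n => by
    rw [← hIinv n]; exact (Iint_bounds (A n) (B n) (hpos n).1 (hpos n).2).2
  have hlimB : Tendsto (fun n => Real.pi / (2 * B n)) atTop (𝓝 (Real.pi / (2 * M))) :=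
    tendsto_const_nhds.div (tendsto_const_nhds.mul hMB) (by positivity)
  have hlimA : Tendsto (fun n => Real.pi / (2 * A n)) atTop (𝓝 (Real.pi / (2 * M))) :=
    tendsto_const_nhds.div (tendsto_const_nhds.mul hMA) (by positivity)
  have h1 : Real.pi / (2 * M) ≤ Iint α β :=
    le_of_tendsto hlimB (Filter.Eventually.of_forall hlow)
  have h2 : Iint α β ≤ Real.pi / (2 * M) :=
    ge_of_tendsto hlimA (Filter.Eventually.of_forall hhigh)
  exact ⟨hfirst, le_antisymm h2 h1⟩
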